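/- The discrete interval hypergraph I(n) admits a conflict-free coloring using at most ⌊log₂ n⌋ + 1 colors. -/

import Mathlib

lemma val_bound {i n : ℕ} (h1 : 1 ≤ i) (h2 : i ≤ n) :
    padicValNat 2 i < Nat.log 2 n + 1 := by
  have hd : 2 ^ padicValNat 2 i ∣ i := pow_padicValNat_dvd
  have : 2 ^ padicValNat 2 i ≤ n :=
    le_trans (Nat.le_of_dvd (by omega) hd) h2
  have := Nat.le_log_iff_pow_le (by norm_num) (by omega) |>.mpr this
  omega

/-- Between two numbers of equal positive valuation lies one of strictly larger valuation. -/
lemma exists_between_val {x y v : ℕ} (hx : 1 ≤ x) (hxy : x < y)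
    (hvx : padicValNat 2 x = v) (hvy : padicValNat 2 y = v) :
    ∃ z, x < z ∧ z ≤ y ∧ 2 ^ (v + 1) ∣ z := by
  obtain ⟨m, hm⟩ : 2 ^ v ∣ x := hvx ▸ pow_padicValNat_dvd
  obtain ⟨m', hm'⟩ : 2 ^ v ∣ y := hvy ▸ pow_padicValNat_dvd
  have hpv : 0 < (2:ℕ) ^ v := Nat.pow_pos (by norm_num)
  have hmlt : m < m' := by
    by_contra h
    push_neg at h
    have : y ≤ x := by rw [hm, hm']; exact Nat.mul_le_mul_left _ h
    omega
  -- m is odd: otherwise 2^(v+1) ∣ x and valuation would exceed v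
  have hmodd : ¬ 2 ∣ m := by
    intro ⟨k, hk⟩
    have hdvd : 2 ^ (v + 1) ∣ x := ⟨k, by rw [hm, hk]; ring⟩
    have := (padicValNat_dvd_iff (p := 2) (v+1) x).mp hdvd
    rcases this with h0 | h
    · exact absurd h0 (by omega)
    · omega
  refine ⟨2 ^ v * (m + 1), ?_, ?_, ?_⟩
  · rw [hm]; exact (Nat.mul_lt_mul_left hpv).mpr (by omega)
  · rw [hm']; exact Nat.mul_le_mul_left _ (by omega)
  · obtain ⟨k, hk⟩ : 2 ∣ m + 1 := by omega
    exact ⟨k, by rw [hk, pow_succ]; ring⟩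

/-- The discrete interval hypergraph `I(n)` admits a conflict-free coloring
with at most `⌊log₂ n⌋ + 1` colors. -/
theorem stmt5 (n : ℕ) :
    ∃ c : ℕ → ℕ, (∀ i ∈ Finset.Icc 1 n, c i < Nat.log 2 n + 1) ∧
      ∀ a b : ℕ, 1 ≤ a → a ≤ b → b ≤ n →
        ∃ x ∈ Finset.Icc a b, ∀ y ∈ Finset.Icc a b, c y = c x → y = x := by
  refine ⟨fun i => padicValNat 2 i, ?_, ?_⟩
  · intro i hi
    simp only [Finset.mem_Icc] at hi
    exact val_bound hi.1 hi.2
  · intro a b ha hab hbn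
    have hne : (Finset.Icc a b).Nonempty := Finset.nonempty_Icc.mpr hab
    obtain ⟨x, hx, hmax⟩ := Finset.exists_max_image (Finset.Icc a b)
      (fun i => padicValNat 2 i) hne
    refine ⟨x, hx, ?_⟩
    intro y hy hcy
    simp only at hcy
    by_contra hne'
    simp only [Finset.mem_Icc] at hx hy
    rcases Nat.lt_or_ge y x with h | h
    · obtain ⟨z, hz1, hz2, hz3⟩ := exists_between_val (by omega) h hcy rfl
      have hz : z ∈ Finset.Icc a b := Finset.mem_Icc.mpr ⟨by omega, by omega⟩
      have := hmax z hz
      have := (padicValNat_dvd_iff (p := 2) _ z).mp hz3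
      rcases this with h0 | hle
      · omega
      · omega
    · have h' : x < y := by omega
      obtain ⟨z, hz1, hz2, hz3⟩ := exists_between_val (by omega) h' rfl hcy
      have hz : z ∈ Finset.Icc a b := Finset.mem_Icc.mpr ⟨by omega, by omega⟩
      have := hmax z hz
      have := (padicValNat_dvd_iff (p := 2) _ z).mp hz3
      rcases this with h0 | hle
      · omega
      · omega
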